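/- Let X be a measurable space and let P₀, P₁ be probability measures on X. Then the infimum, over all randomized tests φ : X → [0,1], of the Bayesian error probability (1/2)∫ φ dP₀ + (1/2)∫ (1−φ) dP₁ equals (1/2)·(P₀ ⊓ P₁)(X); equivalently, the likelihood ratio test is optimal and the optimal Bayesian error probability is half the integral of the pointwise minimum of the densities of P₀ and P₁ with respect to any common dominating σ-finite measure. -/

import Mathlib

open MeasureTheory

lemma integ_of_bdd {X : Type*} [MeasurableSpace X] {μ : Measure X} [IsFiniteMeasure μ]
    {φ : X → ℝ} (hm : Measurable φ) (hb : ∀ x, |φ x| ≤ 1) : Integrable φ μ := by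
  refine (integrable_const (1 : ℝ)).mono' hm.aestronglyMeasurable ?_
  filter_upwards with x
  simpa using hb x

/-- The optimal Bayesian error probability over randomized tests equals half the total
mass of the lattice infimum of the two hypothesis distributions. -/
theorem stmt9 {X : Type*} [MeasurableSpace X] (P₀ P₁ : Measure X)
    [IsProbabilityMeasure P₀] [IsProbabilityMeasure P₁] :
    (⨅ φ : {φ : X → ℝ // Measurable φ ∧ ∀ x, 0 ≤ φ x ∧ φ x ≤ 1},
        (1 / 2) * ∫ x, (φ : X → ℝ) x ∂P₀ + (1 / 2) * ∫ x, (1 - (φ : X → ℝ) x) ∂P₁)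
      = (1 / 2) * ((P₀ ⊓ P₁) Set.univ).toReal := by
  obtain ⟨s, hs, h₁, h₂⟩ := MeasureTheory.hahn_decomposition (μ := P₁) (ν := P₀)
  -- on s : P₀ ≤ P₁ ; on sᶜ : P₁ ≤ P₀
  set m : Measure X := P₀.restrict s + P₁.restrict sᶜ with hm
  have hmle₀ : m ≤ P₀ := by
    have : P₁.restrict sᶜ ≤ P₀.restrict sᶜ := by
      refine Measure.le_iff.mpr fun t ht => ?_
      rw [Measure.restrict_apply ht, Measure.restrict_apply ht]
      exact h₂ _ (ht.inter hs.compl) Set.inter_subset_right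
    calc m ≤ P₀.restrict s + P₀.restrict sᶜ := add_le_add le_rfl this
    _ = P₀ := Measure.restrict_add_restrict_compl hs
  have hmle₁ : m ≤ P₁ := by
    have : P₀.restrict s ≤ P₁.restrict s := by
      refine Measure.le_iff.mpr fun t ht => ?_
      rw [Measure.restrict_apply ht, Measure.restrict_apply ht]
      exact h₁ _ (ht.inter hs) Set.inter_subset_right
    calc m ≤ P₁.restrict s + P₁.restrict sᶜ := add_le_add this le_rfl
    _ = P₁ := Measure.restrict_add_restrict_compl hs
  have hinf : P₀ ⊓ P₁ = m := by
    refine le_antisymm ?_ (le_inf hmle₀ hmle₁)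
    calc P₀ ⊓ P₁ = (P₀ ⊓ P₁).restrict s + (P₀ ⊓ P₁).restrict sᶜ :=
          (Measure.restrict_add_restrict_compl hs).symm
      _ ≤ m := add_le_add (Measure.restrict_mono le_rfl inf_le_left)
          (Measure.restrict_mono le_rfl inf_le_right)
  have hmuniv : (P₀ ⊓ P₁) Set.univ = P₀ s + P₁ sᶜ := by
    rw [hinf, hm]
    simp [Measure.add_apply, Measure.restrict_apply_univ]
  haveI : IsFiniteMeasure (P₀ ⊓ P₁) := isFiniteMeasure_of_le P₀ inf_le_left
  have hbound : ∀ φ : {φ : X → ℝ // Measurable φ ∧ ∀ x, 0 ≤ φ x ∧ φ x ≤ 1},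
      (1 / 2) * ((P₀ ⊓ P₁) Set.univ).toReal ≤
      (1 / 2) * ∫ x, (φ : X → ℝ) x ∂P₀ + (1 / 2) * ∫ x, (1 - (φ : X → ℝ) x) ∂P₁ := by
    rintro ⟨φ, hφm, hφb⟩
    have habs : ∀ x, |φ x| ≤ 1 := fun x => abs_le.mpr ⟨by linarith [(hφb x).1], (hφb x).2⟩
    have habs' : ∀ x, |1 - φ x| ≤ 1 := fun x =>
      abs_le.mpr ⟨by linarith [(hφb x).2], by linarith [(hφb x).1]⟩
    have hint₀ : Integrable φ P₀ := integ_of_bdd hφm habs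
    have hint₁ : Integrable (fun x => 1 - φ x) P₁ :=
      integ_of_bdd (measurable_const.sub hφm) habs'
    have hintm : Integrable φ (P₀ ⊓ P₁) := integ_of_bdd hφm habs
    have hintm' : Integrable (fun x => 1 - φ x) (P₀ ⊓ P₁) :=
      integ_of_bdd (measurable_const.sub hφm) habs'
    have key₀ : ∫ x, φ x ∂(P₀ ⊓ P₁) ≤ ∫ x, φ x ∂P₀ :=
      integral_mono_measure inf_le_left (Filter.Eventually.of_forall fun x => (hφb x).1) hint₀
    have key₁ : ∫ x, (1 - φ x) ∂(P₀ ⊓ P₁) ≤ ∫ x, (1 - φ x) ∂P₁ :=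
      integral_mono_measure inf_le_right
        (Filter.Eventually.of_forall fun x => sub_nonneg.mpr (hφb x).2) hint₁
    have hsum : ∫ x, φ x ∂(P₀ ⊓ P₁) + ∫ x, (1 - φ x) ∂(P₀ ⊓ P₁)
        = ((P₀ ⊓ P₁) Set.univ).toReal := by
      rw [← integral_add hintm hintm']
      simp
      rfl
    simp only
    nlinarith [key₀, key₁, hsum]
  haveI : Nonempty {φ : X → ℝ // Measurable φ ∧ ∀ x, 0 ≤ φ x ∧ φ x ≤ 1} :=
    ⟨⟨fun _ => 0, measurable_const, fun _ => ⟨le_rfl, zero_le_one⟩⟩⟩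
  refine le_antisymm ?_ (le_ciInf hbound)
  -- upper bound via the indicator test
  set φ₀ : X → ℝ := s.indicator (fun _ => 1) with hφ₀
  have hφ₀m : Measurable φ₀ := measurable_const.indicator hs
  have hφ₀b : ∀ x, 0 ≤ φ₀ x ∧ φ₀ x ≤ 1 := by
    intro x
    by_cases hx : x ∈ s <;> simp [hφ₀, hx]
  have hval : (1 / 2) * ∫ x, φ₀ x ∂P₀ + (1 / 2) * ∫ x, (1 - φ₀ x) ∂P₁
      = (1 / 2) * ((P₀ ⊓ P₁) Set.univ).toReal := by
    have e₀ : ∫ x, φ₀ x ∂P₀ = (P₀ s).toReal := by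
      rw [hφ₀]
      exact integral_indicator_one (μ := P₀) hs
    have e₁ : ∫ x, (1 - φ₀ x) ∂P₁ = (P₁ sᶜ).toReal := by
      have : (fun x => 1 - φ₀ x) = sᶜ.indicator (fun _ => (1 : ℝ)) := by
        funext x
        by_cases hx : x ∈ s <;> simp [hφ₀, hx]
      rw [this]
      exact integral_indicator_one (μ := P₁) hs.compl
    rw [e₀, e₁, hmuniv, ENNReal.toReal_add (measure_ne_top _ _) (measure_ne_top _ _)]
    ring
  calc (⨅ φ : {φ : X → ℝ // Measurable φ ∧ ∀ x, 0 ≤ φ x ∧ φ x ≤ 1},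
        (1 / 2) * ∫ x, (φ : X → ℝ) x ∂P₀ + (1 / 2) * ∫ x, (1 - (φ : X → ℝ) x) ∂P₁)
      ≤ (1 / 2) * ∫ x, φ₀ x ∂P₀ + (1 / 2) * ∫ x, (1 - φ₀ x) ∂P₁ :=
        ciInf_le ⟨_, fun r hr => by obtain ⟨φ, rfl⟩ := hr; exact hbound φ⟩
          (⟨φ₀, hφ₀m, hφ₀b⟩ : {φ : X → ℝ // Measurable φ ∧ ∀ x, 0 ≤ φ x ∧ φ x ≤ 1})
    _ = (1 / 2) * ((P₀ ⊓ P₁) Set.univ).toReal := hval
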